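/- arXiv:2007.02619 — 3 statements merged into one kernel-verified Lean document; each statement's English description precedes it below -/
import Mathlib

section
/- Let H ∈ (1/2, 1) and τ > 0. Then H(2H−1) ∫₀^τ ∫₀^τ s · t · |s − t|^{2H−2} ds dt = τ^{2H+2} / (2H + 2). -/
open Real intervalIntegral
open MeasureTheory Set

private lemma mul_self_rpow' {p u : ℝ} (hu : 0 ≤ u) (hp : -1 < p) (hp0 : p ≠ 0) :
    u * u ^ p = u ^ (p + 1) := by
  rcases hu.eq_or_lt with h | h
  · rw [← h, Real.zero_rpow hp0, Real.zero_rpow (by linarith), mul_zero]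
  · rw [Real.rpow_add_one h.ne' p]; exact mul_comm _ _

private lemma moment_int (p : ℝ) (hp : -1 < p) (b : ℝ) :
    ∫ u in (0:ℝ)..b, u ^ p = b ^ (p + 1) / (p + 1) := by
  rw [integral_rpow (Or.inl hp), Real.zero_rpow (by linarith : p + 1 ≠ 0), sub_zero]

private lemma II_mul_rpow {p a b : ℝ} (hp : -1 < p) (ha : 0 ≤ a) (hb : 0 ≤ b) :
    IntervalIntegrable (fun u => u * u ^ p) volume a b := by
  apply (intervalIntegrable_rpow' (by linarith : (-1:ℝ) < p + 1)).congr_ae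
  filter_upwards [ae_restrict_mem measurableSet_uIoc] with u hu
  have hu0 : 0 < u := lt_of_le_of_lt (le_min ha hb) hu.1
  rw [Real.rpow_add_one hu0.ne' p]; exact mul_comm _ _

private lemma II_key {p b : ℝ} (hp : -1 < p) (hb : 0 ≤ b) :
    IntervalIntegrable (fun s => s * (b - s) ^ p) volume 0 b := by
  have h1 : IntervalIntegrable (fun u => (b - u) * u ^ p) volume 0 b := by
    have := ((intervalIntegrable_rpow' hp (a := 0) (b := b)).const_mul b).sub
      (II_mul_rpow hp le_rfl hb)
    simpa only [← sub_mul] using this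
  have := (h1.comp_sub_left b).symm
  simp only [sub_zero, sub_self] at this
  apply this.congr_ae
  filter_upwards with x
  simp [sub_sub_cancel]

private lemma II_key2 {p b : ℝ} (hp : -1 < p) (hb : 0 ≤ b) :
    IntervalIntegrable (fun s => s * s * (b - s) ^ p) volume 0 b := by
  have h1 : IntervalIntegrable (fun u => (b - u) * (b - u) * u ^ p) volume 0 b := by
    have h2 := (((intervalIntegrable_rpow' hp (a := 0) (b := b)).const_mul (b*b)).sub
      ((intervalIntegrable_rpow' (by linarith : (-1:ℝ) < p + 1)).const_mul (2*b))).add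
      (intervalIntegrable_rpow' (by linarith : (-1:ℝ) < p + 2))
    apply h2.congr_ae
    filter_upwards [ae_restrict_mem measurableSet_uIoc] with u hu
    have hu0 : 0 < u := lt_of_le_of_lt (le_min le_rfl hb) hu.1
    rw [show p + 2 = p + 1 + 1 by ring, Real.rpow_add_one hu0.ne' (p+1),
      Real.rpow_add_one hu0.ne' p]
    ring
  have := (h1.comp_sub_left b).symm
  simp only [sub_zero, sub_self] at this
  apply this.congr_ae
  filter_upwards with x
  simp [sub_sub_cancel]

private lemma key (p b : ℝ) (hp : -1 < p) (hp0 : p ≠ 0) (hb : 0 ≤ b) :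
    ∫ s in (0:ℝ)..b, s * (b - s) ^ p = b ^ (p + 2) / ((p + 1) * (p + 2)) := by
  have h1 : ∫ s in (0:ℝ)..b, s * (b - s) ^ p
      = ∫ s in (0:ℝ)..b, (fun u => (b - u) * u ^ p) (b - s) := by
    apply integral_congr
    intro s _
    simp [sub_sub_cancel]
  rw [h1, integral_comp_sub_left (fun u => (b - u) * u ^ p) b, sub_zero, sub_self]
  have h2 : ∫ u in (0:ℝ)..b, (b - u) * u ^ p
      = ∫ u in (0:ℝ)..b, (b * u ^ p - u ^ (p + 1)) := by
    apply integral_congr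
    intro u hu
    rw [uIcc_of_le hb] at hu
    show (b - u) * u ^ p = b * u ^ p - u ^ (p + 1)
    rw [sub_mul, mul_self_rpow' hu.1 hp hp0]
  rw [h2, integral_sub ((intervalIntegrable_rpow' hp).const_mul b)
    (intervalIntegrable_rpow' (by linarith)), intervalIntegral.integral_const_mul,
    moment_int p hp b, moment_int (p+1) (by linarith) b]
  rcases hb.eq_or_lt with h | h
  · rw [← h]
    rw [Real.zero_rpow (by linarith : p + 1 ≠ 0), Real.zero_rpow (by linarith : p + 1 + 1 ≠ 0),
      Real.zero_rpow (by linarith : p + 2 ≠ 0)]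
    ring
  · have e1 : b ^ (p + 2) = b ^ (p + 1) * b := by
      rw [show p + 2 = p + 1 + 1 by ring, Real.rpow_add_one h.ne' (p+1)]
    rw [show p + 1 + 1 = p + 2 by ring, e1]
    have n1 : p + 1 ≠ 0 := by linarith
    have n2 : p + 2 ≠ 0 := by linarith
    generalize b ^ (p + 1) = X
    field_simp
    ring

private lemma key2 (p b : ℝ) (hp : -1 < p) (hp0 : p ≠ 0) (hb : 0 ≤ b) :
    ∫ s in (0:ℝ)..b, s * s * (b - s) ^ p
      = 2 * b ^ (p + 3) / ((p + 1) * (p + 2) * (p + 3)) := by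
  have h1 : ∫ s in (0:ℝ)..b, s * s * (b - s) ^ p
      = ∫ s in (0:ℝ)..b, (fun u => (b - u) * (b - u) * u ^ p) (b - s) := by
    apply integral_congr
    intro s _
    simp [sub_sub_cancel]
  rw [h1, integral_comp_sub_left (fun u => (b - u) * (b - u) * u ^ p) b, sub_zero, sub_self]
  have h2 : ∫ u in (0:ℝ)..b, (b - u) * (b - u) * u ^ p
      = ∫ u in (0:ℝ)..b, (b * b * u ^ p - 2 * b * u ^ (p + 1) + u ^ (p + 2)) := by
    apply integral_congr
    intro u hu
    rw [uIcc_of_le hb] at hu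
    show (b - u) * (b - u) * u ^ p = b * b * u ^ p - 2 * b * u ^ (p + 1) + u ^ (p + 2)
    have e1 : u ^ (p + 1) = u * u ^ p := (mul_self_rpow' hu.1 hp hp0).symm
    have e2 : u ^ (p + 2) = u * u ^ (p + 1) := by
      rw [show p + 2 = (p + 1) + 1 by ring]
      exact (mul_self_rpow' hu.1 (by linarith) (by linarith)).symm
    rw [e2, e1]
    ring
  rw [h2, integral_add (((intervalIntegrable_rpow' hp).const_mul (b*b)).sub
      ((intervalIntegrable_rpow' (by linarith : (-1:ℝ) < p + 1)).const_mul (2*b)))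
      (intervalIntegrable_rpow' (by linarith : (-1:ℝ) < p + 2)),
    integral_sub ((intervalIntegrable_rpow' hp).const_mul (b*b))
      ((intervalIntegrable_rpow' (by linarith : (-1:ℝ) < p + 1)).const_mul (2*b)),
    intervalIntegral.integral_const_mul, intervalIntegral.integral_const_mul,
    moment_int p hp b, moment_int (p+1) (by linarith) b, moment_int (p+2) (by linarith) b]
  rcases hb.eq_or_lt with h | h
  · rw [← h]
    rw [Real.zero_rpow (by linarith : p + 1 ≠ 0), Real.zero_rpow (by linarith : p + 1 + 1 ≠ 0),
      Real.zero_rpow (by linarith : p + 2 + 1 ≠ 0), Real.zero_rpow (by linarith : p + 3 ≠ 0)]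
    ring
  · have e1 : b ^ (p + 2) = b ^ (p + 1) * b := by
      rw [show p + 2 = p + 1 + 1 by ring, Real.rpow_add_one h.ne' (p+1)]
    have e2 : b ^ (p + 3) = b ^ (p + 1) * b * b := by
      rw [show p + 3 = p + 1 + 1 + 1 by ring, Real.rpow_add_one h.ne' (p+1+1),
        Real.rpow_add_one h.ne' (p+1)]
    rw [show p + 1 + 1 = p + 2 by ring, show p + 2 + 1 = p + 3 by ring, e2, e1]
    have n1 : p + 1 ≠ 0 := by linarith
    have n2 : p + 2 ≠ 0 := by linarith
    have n3 : p + 3 ≠ 0 := by linarith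
    generalize b ^ (p + 1) = X
    field_simp
    ring

private lemma key3 (p t b : ℝ) (hp : -1 < p) (hp0 : p ≠ 0) (htb : t ≤ b) :
    ∫ s in t..b, s * (s - t) ^ p
      = (b - t) ^ (p + 2) / (p + 2) + t * ((b - t) ^ (p + 1) / (p + 1)) := by
  have h1 : ∫ s in t..b, s * (s - t) ^ p
      = ∫ s in t..b, (fun u => (u + t) * u ^ p) (s - t) := by
    apply integral_congr
    intro s _
    simp [sub_add_cancel]
  rw [h1, integral_comp_sub_right (fun u => (u + t) * u ^ p) t, sub_self]
  have h2 : ∫ u in (0:ℝ)..(b - t), (u + t) * u ^ p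
      = ∫ u in (0:ℝ)..(b - t), (u ^ (p + 1) + t * u ^ p) := by
    apply integral_congr
    intro u hu
    rw [uIcc_of_le (by linarith : (0:ℝ) ≤ b - t)] at hu
    show (u + t) * u ^ p = u ^ (p + 1) + t * u ^ p
    rw [add_mul, mul_self_rpow' hu.1 hp hp0]
  rw [h2, integral_add (intervalIntegrable_rpow' (by linarith))
      ((intervalIntegrable_rpow' hp).const_mul t), intervalIntegral.integral_const_mul,
    moment_int (p+1) (by linarith) (b - t), moment_int p hp (b - t)]
  rw [show p + 1 + 1 = p + 2 by ring]

/-- Diagonal covariance entry (Appendix B): for `H ∈ (1/2,1)` and `τ > 0`,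
`H(2H−1) ∫₀^τ ∫₀^τ s t |s−t|^{2H−2} ds dt = τ^{2H+2}/(2H+2)`. -/
theorem stmt4 (H : ℝ) (hH : H ∈ Set.Ioo (1/2 : ℝ) 1) (τ : ℝ) (hτ : 0 < τ) :
    H * (2 * H - 1) *
        ∫ t in (0:ℝ)..τ, ∫ s in (0:ℝ)..τ, s * t * |s - t| ^ (2 * H - 2) =
      τ ^ (2 * H + 2) / (2 * H + 2) := by
  obtain ⟨hH1, hH2⟩ := hH
  have hp : (-1 : ℝ) < 2 * H - 2 := by linarith
  have hp0 : 2 * H - 2 ≠ 0 := ne_of_lt (by linarith)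
  have inner : ∀ t ∈ Icc (0:ℝ) τ,
      (∫ s in (0:ℝ)..τ, s * t * |s - t| ^ (2 * H - 2))
        = t ^ (2 * H - 2 + 2 + 1) / ((2 * H - 2 + 1) * (2 * H - 2 + 2))
          + (t * (τ - t) ^ (2 * H - 2 + 2)) / (2 * H - 2 + 2)
          + (t * t * (τ - t) ^ (2 * H - 2 + 1)) / (2 * H - 2 + 1) := by
    intro t ht
    have h1 : (∫ s in (0:ℝ)..τ, s * t * |s - t| ^ (2 * H - 2))
        = t * ∫ s in (0:ℝ)..τ, s * |s - t| ^ (2 * H - 2) := by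
      rw [← intervalIntegral.integral_const_mul]
      apply integral_congr
      intro s _
      ring
    have iA : IntervalIntegrable (fun s => s * |s - t| ^ (2 * H - 2)) volume 0 t := by
      apply (II_key hp ht.1).congr_ae
      filter_upwards [ae_restrict_mem measurableSet_uIoc] with s hs
      rw [uIoc_of_le ht.1] at hs
      rw [abs_sub_comm, abs_of_nonneg (sub_nonneg.mpr hs.2)]
    have iB : IntervalIntegrable (fun s => s * |s - t| ^ (2 * H - 2)) volume t τ := by
      have b1 : IntervalIntegrable (fun u => (u + t) * u ^ (2 * H - 2)) volume 0 (τ - t) := by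
        have := (II_mul_rpow hp le_rfl (sub_nonneg.mpr ht.2)).add
          ((intervalIntegrable_rpow' hp (a := 0) (b := τ - t)).const_mul t)
        apply this.congr_ae
        filter_upwards with u
        ring
      have b2 := b1.comp_sub_right t
      simp only [zero_add, sub_add_cancel] at b2
      apply b2.congr_ae
      filter_upwards [ae_restrict_mem measurableSet_uIoc] with s hs
      rw [uIoc_of_le ht.2] at hs
      rw [abs_of_nonneg (by linarith [hs.1] : (0:ℝ) ≤ s - t)]
    have split := integral_add_adjacent_intervals iA iB
    have v1 : ∫ s in (0:ℝ)..t, s * |s - t| ^ (2 * H - 2)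
        = t ^ (2 * H - 2 + 2) / ((2 * H - 2 + 1) * (2 * H - 2 + 2)) := by
      rw [show (∫ s in (0:ℝ)..t, s * |s - t| ^ (2 * H - 2))
          = ∫ s in (0:ℝ)..t, s * (t - s) ^ (2 * H - 2) from integral_congr fun s hs => by
        rw [uIcc_of_le ht.1] at hs
        rw [abs_sub_comm, abs_of_nonneg (sub_nonneg.mpr hs.2)]]
      exact key _ t hp hp0 ht.1
    have v2 : ∫ s in t..τ, s * |s - t| ^ (2 * H - 2)
        = (τ - t) ^ (2 * H - 2 + 2) / (2 * H - 2 + 2)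
          + t * ((τ - t) ^ (2 * H - 2 + 1) / (2 * H - 2 + 1)) := by
      rw [show (∫ s in t..τ, s * |s - t| ^ (2 * H - 2))
          = ∫ s in t..τ, s * (s - t) ^ (2 * H - 2) from integral_congr fun s hs => by
        rw [uIcc_of_le ht.2] at hs
        rw [abs_of_nonneg (sub_nonneg.mpr hs.1)]]
      exact key3 _ t τ hp hp0 ht.2
    rw [h1, ← split, v1, v2]
    have e : t * t ^ (2 * H - 2 + 2) = t ^ (2 * H - 2 + 2 + 1) :=
      mul_self_rpow' ht.1 (by linarith) (by linarith)
    rw [← e]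
    ring
  have outer : (∫ t in (0:ℝ)..τ, ∫ s in (0:ℝ)..τ, s * t * |s - t| ^ (2 * H - 2))
      = ∫ t in (0:ℝ)..τ,
          (t ^ (2 * H - 2 + 2 + 1) / ((2 * H - 2 + 1) * (2 * H - 2 + 2))
            + ((t * (τ - t) ^ (2 * H - 2 + 2)) / (2 * H - 2 + 2)
            + (t * t * (τ - t) ^ (2 * H - 2 + 1)) / (2 * H - 2 + 1))) := by
    apply integral_congr
    intro t ht
    rw [uIcc_of_le hτ.le] at ht
    beta_reduce
    rw [inner t ht]
    ring
  have i1 : IntervalIntegrable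
      (fun t => t ^ (2 * H - 2 + 2 + 1) / ((2 * H - 2 + 1) * (2 * H - 2 + 2))) volume 0 τ :=
    (intervalIntegrable_rpow' (by linarith)).div_const _
  have i2 : IntervalIntegrable
      (fun t => (t * (τ - t) ^ (2 * H - 2 + 2)) / (2 * H - 2 + 2)) volume 0 τ :=
    (II_key (by linarith) hτ.le).div_const _
  have i3 : IntervalIntegrable
      (fun t => (t * t * (τ - t) ^ (2 * H - 2 + 1)) / (2 * H - 2 + 1)) volume 0 τ :=
    (II_key2 (by linarith) hτ.le).div_const _
  rw [outer, integral_add i1 (i2.add i3), integral_add i2 i3, intervalIntegral.integral_div, intervalIntegral.integral_div,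
    intervalIntegral.integral_div, moment_int (2 * H - 2 + 2 + 1) (by linarith) τ,
    key (2 * H - 2 + 2) τ (by linarith) (by linarith) hτ.le,
    key2 (2 * H - 2 + 1) τ (by linarith) (by linarith) hτ.le]
  rw [show 2 * H - 2 + 2 + 1 + 1 = 2 * H + 2 by ring,
    show 2 * H - 2 + 2 + 2 = 2 * H + 2 by ring,
    show 2 * H - 2 + 1 + 3 = 2 * H + 2 by ring,
    show 2 * H - 2 + 2 + 1 = 2 * H + 1 by ring,
    show 2 * H - 2 + 1 + 1 = 2 * H by ring,
    show 2 * H - 2 + 1 + 2 = 2 * H + 1 by ring,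
    show 2 * H - 2 + 2 = 2 * H by ring,
    show 2 * H - 2 + 1 = 2 * H - 1 by ring]
  generalize τ ^ (2 * H + 2) = X
  have n1 : 2 * H - 1 ≠ 0 := ne_of_gt (by linarith)
  have n2 : 2 * H ≠ 0 := ne_of_gt (by linarith)
  have n3 : 2 * H + 1 ≠ 0 := ne_of_gt (by linarith)
  have n4 : 2 * H + 2 ≠ 0 := ne_of_gt (by linarith)
  field_simp
  ring_nf
  have n5 : -1 + H * 2 ≠ 0 := ne_of_gt (by linarith)
  field_simp
  ring
end

section
/- Let H ∈ (1/2, 1), τ > 0, and let a ≥ 1 be an integer. Then H(2H−1) ∫₀^τ ∫₀^τ u · v · (u − v + aτ)^{2H−2} du dv = −(τ^{2H+2}/2) a^{2H} + (τ^{2H+2}/(2(2H+1))) ((a+1)^{2H+1} − (a−1)^{2H+1}) − (τ^{2H+2}/(2(2H+1)(2H+2))) ((a+1)^{2H+2} − 2a^{2H+2} + (a−1)^{2H+2}). -/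
open Real intervalIntegral

lemma int_pow_aux (p b τ : ℝ) (hp : 0 ≤ p) (hτ : 0 ≤ τ) (hb : τ ≤ b) :
    ∫ v in (0:ℝ)..τ, (b - v) ^ p = (b ^ (p+1) - (b-τ) ^ (p+1)) / (p+1) := by
  have hp1 : (0:ℝ) < p + 1 := by linarith
  have hderiv : ∀ v ∈ Set.uIcc (0:ℝ) τ,
      HasDerivAt (fun v : ℝ => -((b - v) ^ (p+1) / (p+1))) ((b - v) ^ p) v := by
    intro v _
    have h1 : HasDerivAt (fun v : ℝ => b - v) (-1) v := by
      simpa using (hasDerivAt_id v).const_sub b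
    have h2 := (h1.rpow_const (p := p+1) (Or.inr (by linarith : (1:ℝ) ≤ p + 1))).div_const (p+1)
    have h3 := h2.neg
    refine h3.congr_deriv ?_
    have : p + 1 - 1 = p := by ring
    rw [this]
    field_simp
  have hint : IntervalIntegrable (fun v : ℝ => (b - v) ^ p) MeasureTheory.volume 0 τ :=
    ((continuous_const.sub continuous_id).rpow_const (fun x => Or.inr hp)).intervalIntegrable 0 τ
  rw [intervalIntegral.integral_eq_sub_of_hasDerivAt hderiv hint]
  have : b - 0 = b := by ring
  rw [this]
  ring

lemma int_pow_aux' (k p b τ : ℝ) (hp : 0 ≤ p) (hτ : 0 ≤ τ) (hb : τ ≤ b) :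
    ∫ v in (0:ℝ)..τ, k * (b - v) ^ p = k * ((b ^ (p+1) - (b-τ) ^ (p+1)) / (p+1)) := by
  rw [intervalIntegral.integral_const_mul, int_pow_aux p b τ hp hτ hb]

lemma inner_int_aux (α τ c : ℝ) (hα : -1 < α) (hτ : 0 < τ) (hc : 0 < c) :
    ∫ u in (0:ℝ)..τ, u * (u + c) ^ α
      = ((τ+c)^(α+2) - c^(α+2))/(α+2) - c*((τ+c)^(α+1) - c^(α+1))/(α+1) := by
  have hα1 : (0:ℝ) < α + 1 := by linarith
  have hα2 : (0:ℝ) < α + 2 := by linarith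
  have hpos : ∀ u ∈ Set.uIcc (0:ℝ) τ, 0 < u + c := by
    intro u hu
    rw [Set.uIcc_of_le hτ.le] at hu
    have := hu.1
    linarith
  have hderiv : ∀ u ∈ Set.uIcc (0:ℝ) τ,
      HasDerivAt (fun u : ℝ => (u+c)^(α+2)/(α+2) - c*((u+c)^(α+1)/(α+1)))
        (u * (u + c) ^ α) u := by
    intro u hu
    have huc := hpos u hu
    have h1 : HasDerivAt (fun u : ℝ => u + c) 1 u := by
      simpa using (hasDerivAt_id u).add_const c
    have h2 := (h1.rpow_const (p := α+2) (Or.inl huc.ne')).div_const (α+2)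
    have h3 := ((h1.rpow_const (p := α+1) (Or.inl huc.ne')).div_const (α+1)).const_mul c
    have h4 := h2.sub h3
    refine h4.congr_deriv ?_
    have e1 : α + 2 - 1 = α + 1 := by ring
    have e2 : α + 1 - 1 = α := by ring
    rw [e1, e2]
    have e3 : (u + c) ^ (α + 1) = (u + c) ^ α * (u + c) := Real.rpow_add_one huc.ne' α
    rw [e3]
    field_simp
    ring
  have hint : IntervalIntegrable (fun u : ℝ => u * (u + c) ^ α) MeasureTheory.volume 0 τ := by
    apply ContinuousOn.intervalIntegrable
    apply ContinuousOn.mul continuousOn_id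
    exact (continuousOn_id.add continuousOn_const).rpow_const
      (fun x hx => Or.inl (hpos x hx).ne')
  rw [intervalIntegral.integral_eq_sub_of_hasDerivAt hderiv hint]
  have : (0:ℝ) + c = c := by ring
  rw [this]
  ring

/-- Off-diagonal covariance entry (Appendix B): for `H ∈ (1/2,1)`, `τ > 0`
and an integer `a ≥ 1`,
`H(2H−1) ∫₀^τ ∫₀^τ u v (u−v+aτ)^{2H−2} du dv
  = −(τ^{2H+2}/2) a^{2H}
    + (τ^{2H+2}/(2(2H+1))) ((a+1)^{2H+1} − (a−1)^{2H+1})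
    − (τ^{2H+2}/(2(2H+1)(2H+2))) ((a+1)^{2H+2} − 2a^{2H+2} + (a−1)^{2H+2})`. -/
theorem stmt5 (H : ℝ) (hH : H ∈ Set.Ioo (1/2 : ℝ) 1) (τ : ℝ) (hτ : 0 < τ)
    (a : ℕ) (ha : 1 ≤ a) :
    H * (2 * H - 1) *
        ∫ v in (0:ℝ)..τ, ∫ u in (0:ℝ)..τ, u * v * (u - v + a * τ) ^ (2 * H - 2) =
      -(τ ^ (2 * H + 2) / 2) * (a : ℝ) ^ (2 * H)
        + τ ^ (2 * H + 2) / (2 * (2 * H + 1)) *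
            (((a : ℝ) + 1) ^ (2 * H + 1) - ((a : ℝ) - 1) ^ (2 * H + 1))
        - τ ^ (2 * H + 2) / (2 * (2 * H + 1) * (2 * H + 2)) *
            (((a : ℝ) + 1) ^ (2 * H + 2) - 2 * (a : ℝ) ^ (2 * H + 2)
              + ((a : ℝ) - 1) ^ (2 * H + 2)) := by
  obtain ⟨hH1, hH2⟩ := hH
  have h2H1 : (0:ℝ) < 2*H - 1 := by linarith
  have h2H : (0:ℝ) < 2*H := by linarith
  have hA : (1:ℝ) ≤ (a:ℝ) := by exact_mod_cast ha
  set A : ℝ := (a:ℝ) with hA_def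
  -- helper for splitting rpow exponents
  have hsplit : ∀ x : ℝ, 0 < x → x^(2*H) = x^(2*H-1)*x ∧ x^(2*H+1) = x^(2*H-1)*x*x := by
    intro x hx
    have h1 := Real.rpow_add_one hx.ne' (2*H-1)
    rw [show 2*H-1+1 = 2*H from by ring] at h1
    have h2 := Real.rpow_add_one hx.ne' (2*H)
    constructor
    · exact h1
    · rw [h2, h1]
  have hsplit' : ∀ x : ℝ, 0 ≤ x →
      x^(2*H+1) = x^(2*H)*x ∧ x^(2*H+2) = x^(2*H)*x*x := by
    intro x hx
    rcases eq_or_lt_of_le hx with h | h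
    · rw [← h, Real.zero_rpow (by linarith : 2*H+1 ≠ 0),
        Real.zero_rpow (by linarith : 2*H+2 ≠ 0),
        Real.zero_rpow (by linarith : 2*H ≠ 0)]
      constructor <;> ring
    · have h1 := Real.rpow_add_one h.ne' (2*H)
      have h2 := Real.rpow_add_one h.ne' (2*H+1)
      rw [show 2*H+1+1 = 2*H+2 from by ring] at h2
      exact ⟨h1, by rw [h2, h1]⟩
  -- step 1: rewrite the outer integrand a.e.
  have key : (∫ v in (0:ℝ)..τ, ∫ u in (0:ℝ)..τ, u * v * (u - v + A * τ) ^ (2 * H - 2))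
      = ∫ v in (0:ℝ)..τ,
          ((A+1)*τ*τ/(2*H-1) * ((A+1)*τ - v)^(2*H-1)
          + ((A+1)*τ/(2*H) - ((A+1)*τ+τ)/(2*H-1)) * ((A+1)*τ - v)^(2*H)
          + (-(1/(2*H)) + 1/(2*H-1)) * ((A+1)*τ - v)^(2*H+1)
          + (A*τ*(1/(2*H-1) - 1/(2*H))) * (A*τ - v)^(2*H)
          + (1/(2*H) - 1/(2*H-1)) * (A*τ - v)^(2*H+1)) := by
    apply intervalIntegral.integral_congr_ae
    have hne : ∀ᵐ v : ℝ, v ≠ τ := by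
      rw [MeasureTheory.ae_iff]
      have : {v : ℝ | ¬ v ≠ τ} = {τ} := by ext x; simp
      rw [this]
      exact MeasureTheory.measure_singleton τ
    filter_upwards [hne] with v hvne hv
    rw [Set.uIoc_of_le hτ.le] at hv
    have hv0 : 0 < v := hv.1
    have hvτ : v < τ := lt_of_le_of_ne hv.2 hvne
    have hc : 0 < A*τ - v := by nlinarith
    have hw : 0 < (A+1)*τ - v := by nlinarith
    have hcongr : (∫ u in (0:ℝ)..τ, u * v * (u - v + A * τ) ^ (2 * H - 2))
        = ∫ u in (0:ℝ)..τ, v * (u * (u + (A*τ - v)) ^ (2*H-2)) := by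
      apply intervalIntegral.integral_congr
      intro u _
      have h : u - v + A*τ = u + (A*τ - v) := by ring
      simp only [h]
      ring
    rw [hcongr, intervalIntegral.integral_const_mul,
      inner_int_aux (2*H-2) τ (A*τ-v) (by linarith) hτ hc,
      show τ + (A*τ - v) = (A+1)*τ - v from by ring,
      show 2*H-2+2 = 2*H from by ring,
      show 2*H-2+1 = 2*H-1 from by ring,
      (hsplit _ hw).1, (hsplit _ hw).2, (hsplit _ hc).1, (hsplit _ hc).2]
    field_simp
    ring
  rw [hA_def] at key
  rw [key]
  -- step 2: integrability of the pieces
  have hcont : ∀ (k p b : ℝ), 0 ≤ p → Continuous fun v : ℝ => k * (b - v) ^ p := by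
    intro k p b hp
    exact continuous_const.mul
      ((continuous_const.sub continuous_id).rpow_const (fun x => Or.inr hp))
  have c1 := hcont ((A+1)*τ*τ/(2*H-1)) (2*H-1) ((A+1)*τ) h2H1.le
  have c2 := hcont ((A+1)*τ/(2*H) - ((A+1)*τ+τ)/(2*H-1)) (2*H) ((A+1)*τ) h2H.le
  have c3 := hcont (-(1/(2*H)) + 1/(2*H-1)) (2*H+1) ((A+1)*τ) (by linarith)
  have c4 := hcont (A*τ*(1/(2*H-1) - 1/(2*H))) (2*H) (A*τ) h2H.le
  have c5 := hcont (1/(2*H) - 1/(2*H-1)) (2*H+1) (A*τ) (by linarith)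
  have hb1 : τ ≤ (A+1)*τ := by nlinarith
  have hb0 : τ ≤ A*τ := by nlinarith
  rw [intervalIntegral.integral_add ((((c1.fun_add c2).fun_add c3).fun_add c4).intervalIntegrable 0 τ)
        (c5.intervalIntegrable 0 τ),
      intervalIntegral.integral_add (((c1.fun_add c2).fun_add c3).intervalIntegrable 0 τ)
        (c4.intervalIntegrable 0 τ),
      intervalIntegral.integral_add ((c1.fun_add c2).intervalIntegrable 0 τ)
        (c3.intervalIntegrable 0 τ),
      intervalIntegral.integral_add (c1.intervalIntegrable 0 τ) (c2.intervalIntegrable 0 τ),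
      int_pow_aux' _ _ _ _ h2H1.le hτ.le hb1,
      int_pow_aux' _ _ _ _ h2H.le hτ.le hb1,
      int_pow_aux' _ _ _ _ (by linarith : (0:ℝ) ≤ 2*H+1) hτ.le hb1,
      int_pow_aux' _ _ _ _ h2H.le hτ.le hb0,
      int_pow_aux' _ _ _ _ (by linarith : (0:ℝ) ≤ 2*H+1) hτ.le hb0,
      show 2*H-1+1 = 2*H from by ring,
      show 2*H+1+1 = 2*H+2 from by ring,
      show (A+1)*τ - τ = A*τ from by ring,
      show A*τ - τ = (A-1)*τ from by ring]
  -- step 3: expand products and powers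
  have hA1 : (0:ℝ) ≤ A + 1 := by linarith
  have hA0 : (0:ℝ) ≤ A := by linarith
  have hAm : (0:ℝ) ≤ A - 1 := by linarith
  have m1 : ∀ q : ℝ, ((A+1)*τ)^q = (A+1)^q * τ^q := fun q => Real.mul_rpow hA1 hτ.le
  have m2 : ∀ q : ℝ, (A*τ)^q = A^q * τ^q := fun q => Real.mul_rpow hA0 hτ.le
  have m3 : ∀ q : ℝ, ((A-1)*τ)^q = (A-1)^q * τ^q := fun q => Real.mul_rpow hAm hτ.le
  rw [m1 (2*H), m1 (2*H+1), m1 (2*H+2), m2 (2*H), m2 (2*H+1), m2 (2*H+2),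
      m3 (2*H+1), m3 (2*H+2),
      (hsplit' (A+1) hA1).1, (hsplit' (A+1) hA1).2,
      (hsplit' A hA0).1, (hsplit' A hA0).2,
      (hsplit' (A-1) hAm).1, (hsplit' (A-1) hAm).2,
      (hsplit' τ hτ.le).1, (hsplit' τ hτ.le).2]
  have d1 : 2*H - 1 ≠ 0 := by linarith
  have d2 : 2*H ≠ 0 := by linarith
  have d3 : 2*H + 1 ≠ 0 := by linarith
  have d4 : 2*H + 2 ≠ 0 := by linarith
  generalize hK : 2*H-1 = K at *
  have e : H = (K+1)/2 := by linarith
  subst e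
  field_simp
  ring
end

section
/- Let λ > 0, θ ∈ [0, 1], T ∈ ℝ, and let t₀ ≤ s be real numbers. Then |λ^{−1/2} sin(√λ (T − s)) − λ^{−1/2} sin(√λ (T − t₀)) + (s − t₀) cos(√λ (T − t₀))| ≤ 2 λ^{θ/2} (s − t₀)^{1+θ} / (1 + θ). -/
open intervalIntegral MeasureTheory

lemma cos_holder (θ : ℝ) (hθ0 : 0 ≤ θ) (hθ1 : θ ≤ 1) (a b : ℝ) :
    |Real.cos a - Real.cos b| ≤ 2 * |a - b| ^ θ := by
  have hlip : |Real.cos a - Real.cos b| ≤ |a - b| := by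
    have h1 := Real.abs_sin_le_one ((a + b) / 2)
    have h2 : |Real.sin ((a - b) / 2)| ≤ |a - b| / 2 := by
      calc |Real.sin ((a - b) / 2)| ≤ |(a - b) / 2| := Real.abs_sin_le_abs
        _ = |a - b| / 2 := by rw [abs_div]; norm_num
    have hm2 : |(-2:ℝ)| = 2 := by norm_num
    rw [Real.cos_sub_cos, abs_mul, abs_mul, hm2]
    nlinarith [abs_nonneg (Real.sin ((a + b) / 2)), abs_nonneg (Real.sin ((a - b) / 2))]
  rcases eq_or_lt_of_le (abs_nonneg (a - b)) with h0 | h0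
  · have : a = b := by
      have := sub_eq_zero.mp (abs_eq_zero.mp h0.symm)
      linarith
    subst this
    simp
    positivity
  rcases le_or_gt |a - b| 1 with h | h
  · have h1 : |a - b| ^ (1:ℝ) ≤ |a - b| ^ θ :=
      Real.rpow_le_rpow_of_exponent_ge h0 h hθ1
    rw [Real.rpow_one] at h1
    nlinarith [Real.rpow_nonneg (abs_nonneg (a - b)) θ]
  · have h1 : (1:ℝ) ≤ |a - b| ^ θ := Real.one_le_rpow h.le hθ0
    have h2 : |Real.cos a - Real.cos b| ≤ 2 := by
      have := Real.abs_cos_le_one a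
      have := Real.abs_cos_le_one b
      have := abs_sub (Real.cos a) (Real.cos b)
      calc |Real.cos a - Real.cos b| ≤ |Real.cos a| + |Real.cos b| := abs_sub _ _
        _ ≤ 2 := by linarith
    linarith

/-- Eigenmode-level deterministic error of the kernel approximation (5.9-0):
for `λ > 0`, `θ ∈ [0,1]`, `T ∈ ℝ` and `t₀ ≤ s`,
`|λ^{−1/2} sin(√λ(T−s)) − λ^{−1/2} sin(√λ(T−t₀)) + (s−t₀) cos(√λ(T−t₀))|
  ≤ 2 λ^{θ/2} (s−t₀)^{1+θ}/(1+θ)`. -/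
theorem stmt16 (l : ℝ) (hl : 0 < l) (θ : ℝ) (hθ : θ ∈ Set.Icc (0:ℝ) 1)
    (T t₀ s : ℝ) (hts : t₀ ≤ s) :
    |l ^ (-(1:ℝ)/2) * Real.sin (Real.sqrt l * (T - s)) -
        l ^ (-(1:ℝ)/2) * Real.sin (Real.sqrt l * (T - t₀)) +
        (s - t₀) * Real.cos (Real.sqrt l * (T - t₀))| ≤
      2 * l ^ (θ / 2) * (s - t₀) ^ (1 + θ) / (1 + θ) := by
  obtain ⟨hθ0, hθ1⟩ := hθ
  set c := Real.sqrt l with hc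
  have hc0 : 0 < c := Real.sqrt_pos.mpr hl
  have hrw : l ^ (-(1:ℝ)/2) = c⁻¹ := by
    rw [show (-(1:ℝ)/2) = -(1/2) by norm_num, Real.rpow_neg hl.le, hc, Real.sqrt_eq_rpow]
  have hrw2 : l ^ (θ/2) = c ^ θ := by
    rw [show θ/2 = (1/2)*θ by ring, Real.rpow_mul hl.le, hc, Real.sqrt_eq_rpow]
  -- the derivative fact
  have hderiv : ∀ r : ℝ, HasDerivAt
      (fun r => c⁻¹ * Real.sin (c * (T - r)) + r * Real.cos (c * (T - t₀)))
      (Real.cos (c * (T - t₀)) - Real.cos (c * (T - r))) r := by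
    intro r
    have h1 : HasDerivAt (fun r : ℝ => c * (T - r)) (-c) r := by
      simpa using ((hasDerivAt_id r).const_sub T).const_mul c
    have h2 : HasDerivAt (fun r : ℝ => Real.sin (c * (T - r)))
        (Real.cos (c * (T - r)) * (-c)) r :=
      by have := (Real.hasDerivAt_sin (c * (T - r))).comp r h1; exact this
    have h3 := (h2.const_mul c⁻¹).add ((hasDerivAt_id r).mul_const (Real.cos (c * (T - t₀))))
    refine h3.congr_deriv ?_
    linear_combination (-Real.cos (c * (T - r))) * (inv_mul_cancel₀ hc0.ne')
  have hcont : Continuous fun r => Real.cos (c * (T - t₀)) - Real.cos (c * (T - r)) := by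
    continuity
  have hint : IntervalIntegrable (fun r => Real.cos (c * (T - t₀)) - Real.cos (c * (T - r)))
      volume t₀ s := hcont.intervalIntegrable _ _
  have hftc := intervalIntegral.integral_eq_sub_of_hasDerivAt (fun r _ => hderiv r) hint
  -- rewrite LHS as the integral
  have hLHS : l ^ (-(1:ℝ)/2) * Real.sin (Real.sqrt l * (T - s)) -
        l ^ (-(1:ℝ)/2) * Real.sin (Real.sqrt l * (T - t₀)) +
        (s - t₀) * Real.cos (Real.sqrt l * (T - t₀)) =
      ∫ r in t₀..s, (Real.cos (c * (T - t₀)) - Real.cos (c * (T - r))) := by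
    rw [hftc, hrw, ← hc]
    ring
  rw [hLHS]
  -- bound the integrand
  have hbound : ∀ r ∈ Set.Icc t₀ s,
      |Real.cos (c * (T - t₀)) - Real.cos (c * (T - r))| ≤ 2 * c ^ θ * (r - t₀) ^ θ := by
    intro r hr
    have h1 := cos_holder θ hθ0 hθ1 (c * (T - t₀)) (c * (T - r))
    have h2 : |c * (T - t₀) - c * (T - r)| = c * (r - t₀) := by
      rw [show c * (T - t₀) - c * (T - r) = c * (r - t₀) by ring,
        abs_of_nonneg (mul_nonneg hc0.le (by linarith [hr.1]))]
    rw [h2, Real.mul_rpow hc0.le (by linarith [hr.1] : (0:ℝ) ≤ r - t₀)] at h1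
    linarith [h1]
  -- integrability of the bound
  have hBint : IntervalIntegrable (fun r => 2 * c ^ θ * (r - t₀) ^ θ) volume t₀ s := by
    have h0 : IntervalIntegrable (fun x : ℝ => x ^ θ) volume 0 (s - t₀) :=
      intervalIntegral.intervalIntegrable_rpow (Or.inl (by linarith))
    have h1 := (h0.comp_sub_right t₀).const_mul (2 * c ^ θ)
    simpa using h1
  have habs : IntervalIntegrable (fun r => |Real.cos (c * (T - t₀)) - Real.cos (c * (T - r))|)
      volume t₀ s := (hcont.abs).intervalIntegrable _ _
  have step1 : |∫ r in t₀..s, (Real.cos (c * (T - t₀)) - Real.cos (c * (T - r)))| ≤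
      ∫ r in t₀..s, |Real.cos (c * (T - t₀)) - Real.cos (c * (T - r))| :=
    intervalIntegral.abs_integral_le_integral_abs hts
  have step2 : (∫ r in t₀..s, |Real.cos (c * (T - t₀)) - Real.cos (c * (T - r))|) ≤
      ∫ r in t₀..s, 2 * c ^ θ * (r - t₀) ^ θ :=
    intervalIntegral.integral_mono_on hts habs hBint hbound
  -- compute the bound integral
  have hval : (∫ r in t₀..s, 2 * c ^ θ * (r - t₀) ^ θ) =
      2 * c ^ θ * ((s - t₀) ^ (θ + 1) / (θ + 1)) := by
    rw [intervalIntegral.integral_const_mul]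
    have := intervalIntegral.integral_comp_sub_right (a := t₀) (b := s)
      (fun x : ℝ => x ^ θ) t₀
    rw [this, sub_self]
    rw [integral_rpow (Or.inl (by linarith))]
    rw [Real.zero_rpow (by linarith)]
    ring
  have hfinal : 2 * c ^ θ * ((s - t₀) ^ (θ + 1) / (θ + 1)) =
      2 * l ^ (θ / 2) * (s - t₀) ^ (1 + θ) / (1 + θ) := by
    rw [hrw2, add_comm θ 1]
    ring
  calc |∫ r in t₀..s, (Real.cos (c * (T - t₀)) - Real.cos (c * (T - r)))|
      ≤ ∫ r in t₀..s, |Real.cos (c * (T - t₀)) - Real.cos (c * (T - r))| := step1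
    _ ≤ ∫ r in t₀..s, 2 * c ^ θ * (r - t₀) ^ θ := step2
    _ = 2 * c ^ θ * ((s - t₀) ^ (θ + 1) / (θ + 1)) := hval
    _ = 2 * l ^ (θ / 2) * (s - t₀) ^ (1 + θ) / (1 + θ) := hfinal
end
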